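/- Fix p ∈ (0,1) and set k_n = ⌈2 ln n / p⌉. Then the probability, under G(n,p), of the event that every vertex set S with |S| = k_n satisfies |N(S)| ≥ n − |S| − k_n (i.e. |N(S)| ≥ n − 2k_n) tends to 1 as n → ∞. (Lemma: almost surely all k_p-sets have almost full neighborhoods.) -/

import Mathlib

open Finset MeasureTheory Filter
open scoped ENNReal

/-- The simple graph on `Fin n` determined by an indicator of edges,
a function from 2-element subsets (unordered pairs) of `Fin n` to `Bool`. -/
def graphOf {n : ℕ} (f : Sym2 (Fin n) → Bool) : SimpleGraph (Fin n) where
  Adj v w := v ≠ w ∧ f s(v, w) = true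
  symm := ⟨fun v w ⟨h, hf⟩ => ⟨h.symm, by rwa [Sym2.eq_swap]⟩⟩
  loopless := ⟨fun v ⟨h, _⟩ => h rfl⟩

instance {n : ℕ} (f : Sym2 (Fin n) → Bool) : DecidableRel (graphOf f).Adj :=
  fun v w => inferInstanceAs (Decidable (v ≠ w ∧ f s(v, w) = true))

/-- The Erdős–Rényi random graph `G(n,p)`: product Bernoulli(p) measure on
edge-indicator functions. -/
noncomputable def gnp (n : ℕ) (p : ℝ) (hp : p ≤ 1) :
    Measure (Sym2 (Fin n) → Bool) :=
  Measure.pi fun _ =>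
    (PMF.bernoulli (Real.toNNReal p) (Real.toNNReal_le_one.mpr hp)).toMeasure

/-- The external neighborhood `N(X)`: vertices outside `X` adjacent to some vertex of `X`. -/
noncomputable def extNbhd {V : Type*} [Fintype V] (G : SimpleGraph V) (X : Finset V) :
    Finset V := by
  classical exact Finset.univ.filter fun v => v ∉ X ∧ ∃ x ∈ X, G.Adj x v

instance gnp_prob (n : ℕ) (p : ℝ) (hp : p ≤ 1) : IsProbabilityMeasure (gnp n p hp) := by
  unfold gnp; infer_instance

/-- Measure of the cylinder event that all edges in `E` are absent. -/
lemma gnp_cylinder (n : ℕ) (p : ℝ) (hp0 : 0 ≤ p) (hp : p ≤ 1) (E : Finset (Sym2 (Fin n))) :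
    gnp n p hp {f | ∀ e ∈ E, f e = false} = ENNReal.ofReal (1 - p) ^ E.card := by
  classical
  have hset : {f : Sym2 (Fin n) → Bool | ∀ e ∈ E, f e = false} =
      Set.pi Set.univ (fun e => if e ∈ E then ({false} : Set Bool) else Set.univ) := by
    ext f
    simp only [Set.mem_setOf_eq, Set.mem_pi, Set.mem_univ, true_implies]
    constructor
    · intro h e
      by_cases he : e ∈ E
      · simp [he, h e he]
      · simp [he]
    · intro h e he
      have := h e
      simpa [he] using this
  have hb : ∀ e : Sym2 (Fin n),
      (PMF.bernoulli (Real.toNNReal p) (Real.toNNReal_le_one.mpr hp)).toMeasure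
        (if e ∈ E then ({false} : Set Bool) else Set.univ)
        = if e ∈ E then ENNReal.ofReal (1 - p) else 1 := by
    intro e
    by_cases he : e ∈ E
    · simp only [he, if_true]
      rw [PMF.toMeasure_apply_singleton _ _ (measurableSet_singleton _)]
      simp only [PMF.bernoulli_apply, Bool.cond_false]
      rw [ENNReal.ofReal_sub _ hp0, ENNReal.ofReal_one, ENNReal.coe_sub, ENNReal.coe_one]; rfl
    · simp only [he, if_false]
      exact measure_univ
  rw [hset, gnp, Measure.pi_pi]
  rw [Finset.prod_congr rfl fun e _ => hb e]
  rw [Finset.prod_ite_mem, Finset.univ_inter, Finset.prod_const]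

/-- The real union-bound quantity tends to zero. -/
lemma real_bound_tendsto (p : ℝ) (hp0 : 0 < p) (hp1 : p < 1) :
    Tendsto (fun n : ℕ =>
        ((n.choose ⌈2 * Real.log n / p⌉₊ : ℝ)) ^ 2 *
          (1 - p) ^ (⌈2 * Real.log n / p⌉₊ * ⌈2 * Real.log n / p⌉₊))
      atTop (nhds 0) := by
  set k : ℕ → ℕ := fun n => ⌈2 * Real.log n / p⌉₊ with hk
  have hq0 : (0 : ℝ) ≤ 1 - p := by linarith
  -- k tends to infinity
  have hktop : Tendsto k atTop atTop := by
    apply tendsto_nat_ceil_atTop.comp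
    apply Tendsto.atTop_div_const hp0
    exact (tendsto_const_mul_atTop_of_pos (by norm_num : (0:ℝ) < 2)).mpr
      (Real.tendsto_log_atTop.comp tendsto_natCast_atTop_atTop)
  -- upper bound sequence tends to 0
  have hu : Tendsto (fun n : ℕ => (1 / (Nat.factorial (k n) : ℝ)) ^ 2) atTop (nhds 0) := by
    have h1 : Tendsto (fun n : ℕ => (1 / (Nat.factorial (k n) : ℝ))) atTop (nhds 0) := by
      apply tendsto_one_div_atTop_nhds_zero_nat.comp
      exact factorial_tendsto_atTop.comp hktop
    simpa using h1.pow 2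
  refine squeeze_zero' (g := fun n => (1 / (Nat.factorial (k n) : ℝ)) ^ 2)
    (Eventually.of_forall fun n => by positivity) ?_ hu
  · filter_upwards [eventually_ge_atTop 1] with n hn
    have hn1 : (1 : ℝ) ≤ (n : ℝ) := by exact_mod_cast hn
    -- (1-p)^(k n) ≤ 1 / n^2
    have hpk : 2 * Real.log n ≤ p * k n := by
      have := Nat.le_ceil (2 * Real.log n / p)
      calc 2 * Real.log n = p * (2 * Real.log n / p) := by field_simp
        _ ≤ p * k n := by
          apply mul_le_mul_of_nonneg_left this hp0.le
    have hq1 : (1 - p) ^ (k n) ≤ Real.exp (-(p * k n)) := by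
      calc (1 - p) ^ (k n) ≤ Real.exp (-p) ^ (k n) := by
            apply pow_le_pow_left₀ hq0
            linarith [Real.add_one_le_exp (-p)]
        _ = Real.exp (-(p * k n)) := by
            rw [← Real.exp_nat_mul]; ring_nf
    have hexp : Real.exp (-(p * k n)) ≤ 1 / (n : ℝ) ^ 2 := by
      have h2 : Real.exp (2 * Real.log n) = (n : ℝ) ^ 2 := by
        rw [two_mul, Real.exp_add, Real.exp_log (by linarith), sq]
      calc Real.exp (-(p * k n)) ≤ Real.exp (-(2 * Real.log n)) :=
            Real.exp_le_exp.mpr (by linarith)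
        _ = 1 / (n : ℝ) ^ 2 := by rw [Real.exp_neg, h2, one_div]
    have hnq : (n : ℝ) ^ 2 * (1 - p) ^ (k n) ≤ 1 := by
      calc (n : ℝ) ^ 2 * (1 - p) ^ (k n) ≤ (n : ℝ) ^ 2 * (1 / (n:ℝ)^2) :=
            mul_le_mul_of_nonneg_left (hq1.trans hexp) (by positivity)
        _ = 1 := by field_simp
    -- choose bound
    have hchoose : ((n.choose (k n)) : ℝ) ≤ (n : ℝ) ^ (k n) / (Nat.factorial (k n) : ℝ) := by
      rw [le_div_iff₀ (by positivity)]
      have h := Nat.descFactorial_le_pow n (k n)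
      rw [Nat.descFactorial_eq_factorial_mul_choose] at h
      calc ((n.choose (k n)) : ℝ) * (Nat.factorial (k n) : ℝ)
          = ((Nat.factorial (k n) * n.choose (k n) : ℕ) : ℝ) := by push_cast; ring
        _ ≤ ((n ^ (k n) : ℕ) : ℝ) := by exact_mod_cast h
        _ = (n : ℝ) ^ (k n) := by push_cast; ring
    show ((n.choose (k n)) : ℝ) ^ 2 * (1 - p) ^ (k n * k n) ≤ _
    calc ((n.choose (k n)) : ℝ) ^ 2 * (1 - p) ^ (k n * k n)
        ≤ ((n : ℝ) ^ (k n) / (Nat.factorial (k n) : ℝ)) ^ 2 * (1 - p) ^ (k n * k n) := by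
          apply mul_le_mul_of_nonneg_right _ (by positivity)
          exact pow_le_pow_left₀ (by positivity) hchoose 2
      _ = (1 / (Nat.factorial (k n) : ℝ)) ^ 2 * (((n : ℝ) ^ 2 * (1 - p) ^ (k n)) ^ (k n)) := by
          rw [mul_pow, ← pow_mul, ← pow_mul, div_pow]
          ring_nf
      _ ≤ (1 / (Nat.factorial (k n) : ℝ)) ^ 2 * 1 := by
          apply mul_le_mul_of_nonneg_left _ (by positivity)
          exact pow_le_one₀ (by positivity) hnq
      _ = (1 / (Nat.factorial (k n) : ℝ)) ^ 2 := mul_one _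

theorem gnp_all_ksets_large_nbhd (p : ℝ) (hp0 : 0 < p) (hp1 : p < 1) :
    Tendsto
      (fun n : ℕ =>
        gnp n p hp1.le
          {f | ∀ S : Finset (Fin n), S.card = ⌈2 * Real.log n / p⌉₊ →
            n - 2 * ⌈2 * Real.log n / p⌉₊ ≤ (extNbhd (graphOf f) S).card})
      atTop (nhds (1 : ℝ≥0∞)) := by
  classical
  set k : ℕ → ℕ := fun n => ⌈2 * Real.log n / p⌉₊ with hk
  set A : (n : ℕ) → Set (Sym2 (Fin n) → Bool) := fun n =>
    {f | ∀ S : Finset (Fin n), S.card = k n →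
      n - 2 * k n ≤ (extNbhd (graphOf f) S).card} with hA
  set c : ℕ → ℝ := fun n =>
    ((n.choose (k n) : ℝ)) ^ 2 * (1 - p) ^ (k n * k n) with hc
  have key : ∀ n : ℕ, 1 - ENNReal.ofReal (c n) ≤ gnp n p hp1.le (A n) := by
    intro n
    -- the bad event is contained in the union of cylinder events
    set P : Finset (Finset (Fin n) × Finset (Fin n)) :=
      ((Finset.univ.powersetCard (k n)) ×ˢ (Finset.univ.powersetCard (k n))).filter
        (fun q => Disjoint q.1 q.2) with hP
    set E : Finset (Fin n) × Finset (Fin n) → Finset (Sym2 (Fin n)) :=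
      fun q => (q.1 ×ˢ q.2).image (fun x => s(x.1, x.2)) with hE
    have hsub : (A n)ᶜ ⊆ ⋃ q ∈ P, {f : Sym2 (Fin n) → Bool | ∀ e ∈ E q, f e = false} := by
      intro f hf
      simp only [hA, Set.mem_compl_iff, Set.mem_setOf_eq, not_forall] at hf
      obtain ⟨S, hScard, hN⟩ := hf
      rw [not_le] at hN
      set N := extNbhd (graphOf f) S with hNdef
      have hNsub : N ⊆ Sᶜ := by
        intro v hv
        simp only [hNdef, extNbhd, Finset.mem_filter] at hv
        simp [hv.2.1]
      set R : Finset (Fin n) := Sᶜ \ N with hR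
      have hRcard : k n ≤ R.card := by
        have h1 : R.card = Sᶜ.card - N.card := Finset.card_sdiff_of_subset hNsub
        have h2 : Sᶜ.card = n - S.card := by
          rw [Finset.card_compl, Fintype.card_fin]
        have h3 : N.card < n - 2 * k n := hN
        omega
      obtain ⟨T, hTR, hTcard⟩ := Finset.exists_subset_card_eq hRcard
      have hdisj : Disjoint S T := by
        rw [Finset.disjoint_left]
        intro a haS haT
        have := hTR haT
        rw [hR, Finset.mem_sdiff, Finset.mem_compl] at this
        exact this.1 haS
      have hPmem : (S, T) ∈ P := by
        simp only [hP, Finset.mem_filter, Finset.mem_product,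
          Finset.mem_powersetCard_univ]
        exact ⟨⟨hScard, hTcard⟩, hdisj⟩
      simp only [Set.mem_iUnion]
      refine ⟨(S, T), hPmem, ?_⟩
      · simp only [Set.mem_setOf_eq, hE]
        intro e he
        simp only [Finset.mem_image, Finset.mem_product] at he
        obtain ⟨⟨x, y⟩, ⟨hxS, hyT⟩, rfl⟩ := he
        have hyR := hTR hyT
        rw [hR, Finset.mem_sdiff, Finset.mem_compl] at hyR
        have hyNot : ¬ (graphOf f).Adj x y := by
          intro hadj
          apply hyR.2
          simp only [hNdef, extNbhd, Finset.mem_filter]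
          exact ⟨Finset.mem_univ _, hyR.1, x, hxS, hadj⟩
        have hxy : x ≠ y := fun h => hyR.1 (h ▸ hxS)
        simp only [graphOf, ne_eq] at hyNot
        push_neg at hyNot
        exact Bool.not_eq_true _ ▸ (hyNot hxy)
      -- end of hsub
    have hcompl : gnp n p hp1.le (A n)ᶜ ≤ ENNReal.ofReal (c n) := by
      have hE' : ∀ q ∈ P, (E q).card = k n * k n := by
        intro q hq
        simp only [hP, Finset.mem_filter, Finset.mem_product,
          Finset.mem_powersetCard_univ] at hq
        obtain ⟨⟨h1, h2⟩, hd⟩ := hq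
        rw [hE]
        rw [Finset.card_image_of_injOn, Finset.card_product, h1, h2]
        intro a ha b hb hab
        simp only [Finset.mem_coe, Finset.mem_product] at ha hb
        rw [Sym2.eq_iff] at hab
        rcases hab with ⟨hx, hy⟩ | ⟨hx, hy⟩
        · exact Prod.ext hx hy
        · exact absurd ha.1 (by
            rw [hx]
            exact fun h => (Finset.disjoint_left.mp hd h) hb.2)
      calc gnp n p hp1.le (A n)ᶜ
          ≤ gnp n p hp1.le (⋃ q ∈ P, {f : Sym2 (Fin n) → Bool | ∀ e ∈ E q, f e = false}) :=
            measure_mono hsub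
        _ ≤ ∑ q ∈ P, gnp n p hp1.le {f : Sym2 (Fin n) → Bool | ∀ e ∈ E q, f e = false} :=
            measure_biUnion_finset_le _ _
        _ = ∑ q ∈ P, ENNReal.ofReal (1 - p) ^ (k n * k n) := by
            apply Finset.sum_congr rfl
            intro q hq
            rw [gnp_cylinder n p hp0.le hp1.le (E q), hE' q hq]
        _ = P.card * ENNReal.ofReal (1 - p) ^ (k n * k n) := by
            rw [Finset.sum_const, nsmul_eq_mul]
        _ ≤ ((n.choose (k n)) ^ 2 : ℕ) * ENNReal.ofReal (1 - p) ^ (k n * k n) := by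
            apply mul_le_mul_left
            have : P.card ≤ (n.choose (k n)) ^ 2 := by
              calc P.card ≤ ((Finset.univ.powersetCard (k n)) ×ˢ
                    (Finset.univ.powersetCard (k n))).card := Finset.card_filter_le _ _
                _ = (n.choose (k n)) ^ 2 := by
                    rw [Finset.card_product, Finset.card_powersetCard,
                      Finset.card_univ, Fintype.card_fin, sq]
            exact_mod_cast Nat.cast_le.mpr this
        _ = ENNReal.ofReal (c n) := by
            rw [hc, ENNReal.ofReal_mul (by positivity),
              ENNReal.ofReal_pow (Nat.cast_nonneg _), ENNReal.ofReal_natCast,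
              ENNReal.ofReal_pow (by linarith)]
            push_cast
            ring
    have hAm : MeasurableSet (A n) := (Set.toFinite _).measurableSet
    have h1 : gnp n p hp1.le (A n)ᶜ = 1 - gnp n p hp1.le (A n) :=
      prob_compl_eq_one_sub hAm
    have h2 : 1 - gnp n p hp1.le (A n) ≤ ENNReal.ofReal (c n) := h1 ▸ hcompl
    have h3 := tsub_le_iff_right.mp h2
    -- 1 ≤ ofReal (c n) + μ (A n), so 1 - ofReal (c n) ≤ μ (A n)
    exact tsub_le_iff_right.mpr (by rwa [add_comm] at h3)
  have hlow : Tendsto (fun n => 1 - ENNReal.ofReal (c n)) atTop (nhds 1) := by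
    have hc0 : Tendsto (fun n => ENNReal.ofReal (c n)) atTop (nhds 0) := by
      have := real_bound_tendsto p hp0 hp1
      have h := (ENNReal.tendsto_ofReal this)
      simpa only [ENNReal.ofReal_zero] using h
    have := ENNReal.Tendsto.sub (tendsto_const_nhds (x := (1 : ℝ≥0∞))) hc0
      (Or.inl (by simp))
    simpa using this
  apply tendsto_of_tendsto_of_tendsto_of_le_of_le hlow tendsto_const_nhds key
  intro n
  exact prob_le_one
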